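/- arXiv:2106.01000 — 2 statements merged into one kernel-verified Lean document; each statement's English description precedes it below -/
import Mathlib

section
/- Let n, m be unit vectors in ℝ^{d+1} with ⟨n, m⟩ ≠ 0, P = I − n⊗n, P_h = I − m⊗m. Define B = P P_h and B⁻ = P_h (I − (n⊗m)/⟨n,m⟩) P. Then B B⁻ = P and B⁻ B = P_h, viewing B as a map from range(P_h) to range(P) and B⁻ as its inverse. -/
open Matrix

theorem vvmul {d : ℕ} (a b c e : Fin (d + 1) → ℝ) :
    Matrix.vecMulVec a b * Matrix.vecMulVec c e = (b ⬝ᵥ c) • Matrix.vecMulVec a e := by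
  ext i j
  simp [Matrix.mul_apply, Matrix.vecMulVec_apply, dotProduct, Finset.sum_mul,
    Finset.mul_sum]
  congr 1; ext k; ring

/-- Flat case of the derivative of the closest-point projection: for unit
vectors `n, m` with `⟨n,m⟩ ≠ 0`, `P = I - n⊗n`, `Ph = I - m⊗m`, the maps
`B = P Ph` and `B⁻ = Ph (I - n⊗m/⟨n,m⟩) P` satisfy `B B⁻ = P` and
`B⁻ B = Ph`. -/
theorem flat_closest_point_projection_inverse (d : ℕ) (n m : Fin (d + 1) → ℝ)
    (hn : ∑ i, n i ^ 2 = 1) (hm : ∑ i, m i ^ 2 = 1)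
    (hnm : n ⬝ᵥ m ≠ 0) :
    ((1 - Matrix.vecMulVec n n) * (1 - Matrix.vecMulVec m m)) *
        ((1 - Matrix.vecMulVec m m) *
          (1 - (n ⬝ᵥ m)⁻¹ • Matrix.vecMulVec n m) * (1 - Matrix.vecMulVec n n))
      = 1 - Matrix.vecMulVec n n ∧
    ((1 - Matrix.vecMulVec m m) *
          (1 - (n ⬝ᵥ m)⁻¹ • Matrix.vecMulVec n m) * (1 - Matrix.vecMulVec n n)) *
        ((1 - Matrix.vecMulVec n n) * (1 - Matrix.vecMulVec m m))
      = 1 - Matrix.vecMulVec m m := by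
  have hn' : n ⬝ᵥ n = 1 := by simpa [dotProduct, sq] using hn
  have hm' : m ⬝ᵥ m = 1 := by simpa [dotProduct, sq] using hm
  have hmn : m ⬝ᵥ n = n ⬝ᵥ m := dotProduct_comm m n
  have ha : (n ⬝ᵥ m)⁻¹ * (n ⬝ᵥ m) = 1 := inv_mul_cancel₀ hnm
  constructor <;>
  · simp only [mul_sub, sub_mul, mul_one, one_mul, Matrix.mul_smul, Matrix.smul_mul,
      vvmul, hn', hm', hmn, smul_smul, one_smul]
    match_scalars <;> field_simp <;> ring
end

section
/- Let n, m be unit vectors in ℝ^{d+1} with ⟨n,m⟩ > 0, and let P = I − n⊗n, P_h = I − m⊗m, B = P P_h. Then ‖B B^T − P‖_F ≤ C‖n − m‖² for an absolute constant C (e.g. C = 4): the map B is an approximate isometry between the two hyperplanes with error quadratic in the normal deviation. -/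
open Matrix

private lemma my_mul_vecMulVec {k : ℕ} (A : Matrix (Fin k) (Fin k) ℝ) (v w : Fin k → ℝ) :
    A * vecMulVec v w = vecMulVec (A *ᵥ v) w := by
  ext i j
  simp [mul_apply, vecMulVec_apply, mulVec, dotProduct, Finset.sum_mul, mul_assoc]

private lemma my_vecMulVec_mul {k : ℕ} (v w : Fin k → ℝ) (A : Matrix (Fin k) (Fin k) ℝ) :
    vecMulVec v w * A = vecMulVec v (w ᵥ* A) := by
  ext i j
  simp [mul_apply, vecMulVec_apply, vecMul, dotProduct, Finset.mul_sum, mul_assoc]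

private lemma vecMulVec_idem {k : ℕ} (v : Fin k → ℝ) (hv : ∑ i, v i ^ 2 = 1) :
    vecMulVec v v * vecMulVec v v = vecMulVec v v := by
  ext i j
  simp only [mul_apply, vecMulVec_apply]
  have : ∑ x, v i * v x * (v x * v j) = (v i * v j) * ∑ x, v x ^ 2 := by
    rw [Finset.mul_sum]; congr 1; ext x; ring
  rw [this, hv, mul_one]

/-- For unit vectors `n, m` with `⟨n,m⟩ > 0`, `P = I - n⊗n`, `Ph = I - m⊗m`
and `B = P Ph`, the map `B` is an approximate isometry:
`‖B Bᵀ - P‖_F ≤ 4 ‖n - m‖²`. -/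
theorem flat_B_approximate_isometry (d : ℕ) (n m : Fin (d + 1) → ℝ)
    (hn : ∑ i, n i ^ 2 = 1) (hm : ∑ i, m i ^ 2 = 1)
    (hpos : 0 < n ⬝ᵥ m) :
    Real.sqrt (∑ i, ∑ j,
        (((((1 - Matrix.vecMulVec n n) * (1 - Matrix.vecMulVec m m)) *
            ((1 - Matrix.vecMulVec n n) * (1 - Matrix.vecMulVec m m))ᵀ -
          (1 - Matrix.vecMulVec n n)) : Matrix (Fin (d + 1)) (Fin (d + 1)) ℝ) i j) ^ 2)
      ≤ 4 * ∑ i, (n i - m i) ^ 2 := by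
  set c : ℝ := n ⬝ᵥ m with hc
  set v : Fin (d + 1) → ℝ := fun i => m i - c * n i with hv
  set N : Matrix (Fin (d + 1)) (Fin (d + 1)) ℝ := vecMulVec n n with hN
  set M : Matrix (Fin (d + 1)) (Fin (d + 1)) ℝ := vecMulVec m m with hM
  -- key matrix identity
  have hNsym : Nᵀ = N := by ext i j; simp [hN, vecMulVec_apply, mul_comm]
  have hMsym : Mᵀ = M := by ext i j; simp [hM, vecMulVec_apply, mul_comm]
  have hNN : N * N = N := vecMulVec_idem n hn
  have hMM : M * M = M := vecMulVec_idem m hm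
  have hkey : ((1 - N) * (1 - M)) * ((1 - N) * (1 - M))ᵀ - (1 - N)
      = - vecMulVec v v := by
    have htr : ((1 - N) * (1 - M))ᵀ = (1 - M) * (1 - N) := by
      rw [transpose_mul, transpose_sub, transpose_sub, transpose_one, hNsym, hMsym]
    rw [htr]
    have hexp : ((1 - N) * (1 - M)) * ((1 - M) * (1 - N))
        = (1 - N) - (1 - N) * M * (1 - N) := by
      have h1 : (1 - M) * (1 - M) = 1 - M := by
        rw [sub_mul, one_mul, mul_sub, mul_one, hMM, sub_self, sub_zero]
      have h2 : (1 - N) * (1 - N) = 1 - N := by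
        rw [sub_mul, one_mul, mul_sub, mul_one, hNN, sub_self, sub_zero]
      calc ((1 - N) * (1 - M)) * ((1 - M) * (1 - N))
          = (1 - N) * ((1 - M) * (1 - M)) * (1 - N) := by noncomm_ring
        _ = (1 - N) * (1 - M) * (1 - N) := by rw [h1]
        _ = (1 - N) * (1 - N) - (1 - N) * M * (1 - N) := by noncomm_ring
        _ = (1 - N) - (1 - N) * M * (1 - N) := by rw [h2]
    rw [hexp]
    have hmulv : (1 - N) *ᵥ m = v := by
      ext i
      simp only [hv, mulVec, Matrix.sub_apply, one_apply, hN, vecMulVec_apply, dotProduct]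
      rw [Finset.sum_congr rfl (fun x _ => by
        rw [show ((if i = x then (1:ℝ) else 0) - n i * n x) * m x
            = (if i = x then m x else 0) - n i * (n x * m x) by
          split <;> ring])]
      rw [Finset.sum_sub_distrib, Finset.sum_ite_eq, ← Finset.mul_sum]
      simp [hc, dotProduct, mul_comm]
    have hvmul : m ᵥ* (1 - N) = v := by
      ext j
      simp only [hv, vecMul, Matrix.sub_apply, one_apply, hN, vecMulVec_apply, dotProduct]
      rw [Finset.sum_congr rfl (fun x _ => by
        rw [show m x * ((if x = j then (1:ℝ) else 0) - n x * n j)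
            = (if x = j then m x else 0) - (m x * n x) * n j by
          split <;> ring])]
      rw [Finset.sum_sub_distrib, Finset.sum_ite_eq', ← Finset.sum_mul]
      have hs : ∑ x, m x * n x = c := by simp [hc, dotProduct, mul_comm]
      rw [hs]; simp
    have hvv : (1 - N) * M * (1 - N) = vecMulVec v v := by
      rw [hM, my_mul_vecMulVec, my_vecMulVec_mul, hmulv, hvmul]
    rw [hvv]; abel
  -- rewrite the sum
  have hsum : (∑ i, ∑ j,
      (((((1 - N) * (1 - M)) * ((1 - N) * (1 - M))ᵀ - (1 - N))
        : Matrix (Fin (d + 1)) (Fin (d + 1)) ℝ) i j) ^ 2)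
      = (∑ i, v i ^ 2) ^ 2 := by
    rw [hkey]
    have : ∀ i j : Fin (d + 1), ((- vecMulVec v v
        : Matrix (Fin (d + 1)) (Fin (d + 1)) ℝ) i j) ^ 2 = v i ^ 2 * v j ^ 2 := by
      intro i j; rw [Matrix.neg_apply, vecMulVec_apply]; ring
    simp_rw [this, ← Finset.mul_sum, ← Finset.sum_mul, sq]
  rw [hsum, Real.sqrt_sq (Finset.sum_nonneg fun i _ => sq_nonneg _)]
  -- compute ∑ v² = 1 - c²
  have hmn : ∑ i, m i * n i = c := by simp [hc, dotProduct, mul_comm]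
  have hvnorm : ∑ i, v i ^ 2 = 1 - c ^ 2 := by
    have : ∀ i : Fin (d + 1), v i ^ 2 = m i ^ 2 - 2 * c * (m i * n i) + c ^ 2 * n i ^ 2 := by
      intro i; simp only [hv]; ring
    simp_rw [this, Finset.sum_add_distrib, Finset.sum_sub_distrib, ← Finset.mul_sum, hm, hn,
      hmn]
    ring
  have hrhs : ∑ i, (n i - m i) ^ 2 = 2 - 2 * c := by
    have : ∀ i : Fin (d + 1), (n i - m i) ^ 2 = n i ^ 2 + m i ^ 2 - 2 * (m i * n i) := by
      intro i; ring
    simp_rw [this, Finset.sum_sub_distrib, Finset.sum_add_distrib, ← Finset.mul_sum, hm, hn,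
      hmn]; ring
  rw [hvnorm, hrhs]
  -- Cauchy-Schwarz: c ≤ 1
  have hcs : c ^ 2 ≤ 1 := by
    have := Finset.sum_mul_sq_le_sq_mul_sq Finset.univ n m
    have hcnm : (∑ i, n i * m i) = c := by simp [hc, dotProduct]
    rw [hcnm, hn, hm] at this
    linarith
  nlinarith [hpos, hcs]
end
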